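/- arXiv:2005.06855 — 6 statements merged into one kernel-verified Lean document; each statement's English description precedes it below -/
import Mathlib

section
/- Let S be a profinite space written as a cofiltered limit S = lim_{i∈I} S_i of finite discrete spaces, and let T be an arbitrary discrete topological space. Then the natural map colim_i C(S_i, T) → C(S, T) from the filtered colimit of sets of continuous maps is a bijection. -/
set_option linter.unusedVariables false

open CategoryTheory Limits

namespace ProofAux

variable {J : Type*} [Category J]

theorem exists_point (G : J ⥤ TopCat) (d : Cone G) (hd : IsLimit d)
    (s : ∀ j, G.obj j) (hs : ∀ {j j'} (u : j ⟶ j'), G.map u (s j) = s j') :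
    ∃ z : d.pt, ∀ j, d.π.app j z = s j := by
  let e : Cone G :=
    { pt := TopCat.of PUnit
      π := { app := fun j => TopCat.ofHom (ContinuousMap.const _ (s j))
             naturality := fun j j' u => by
               ext x
               exact (hs u).symm } }
  refine ⟨hd.lift e PUnit.unit, fun j => ?_⟩
  have h2 : ∀ x, (hd.lift e ≫ d.π.app j) x = (e.π.app j) x := fun x => by
    rw [hd.fac e j]
  exact h2 PUnit.unit

theorem eq_of_proj_eq (G : J ⥤ TopCat) (d : Cone G) (hd : IsLimit d)
    {x y : d.pt} (hxy : ∀ j, d.π.app j x = d.π.app j y) : x = y := by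
  let px : TopCat.of PUnit ⟶ d.pt := TopCat.ofHom (ContinuousMap.const _ x)
  let py : TopCat.of PUnit ⟶ d.pt := TopCat.ofHom (ContinuousMap.const _ y)
  have h : px = py := hd.hom_ext fun j => by
    ext w
    exact hxy j
  exact ConcreteCategory.congr_hom h PUnit.unit

end ProofAux

namespace ProofAux

/-- The topology induced by the projections of a cone. -/
def projTop {I : Type*} [Category I] (F : I ⥤ TopCat) (c : Cone F) :
    TopologicalSpace c.pt :=
  ⨅ i, TopologicalSpace.induced (c.π.app i) (F.obj i).str

theorem cone_naturality {I : Type*} [Category I] (F : I ⥤ TopCat) (c : Cone F)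
    {i j : I} (u : i ⟶ j) (x : c.pt) : F.map u (c.π.app i x) = c.π.app j x := by
  have h := c.w u
  have h2 : ∀ y : c.pt, (c.π.app i ≫ F.map u) y = (c.π.app j) y := fun y => by rw [h]
  exact h2 x

theorem pt_str_eq {I : Type*} [Category I] (F : I ⥤ TopCat) (c : Cone F) (hc : IsLimit c) :
    c.pt.str = projTop F c := by
  have hcont : ∀ i : I, @Continuous _ _ (projTop F c) (F.obj i).str (c.π.app i) := fun i =>
    continuous_iInf_dom (continuous_induced_dom (t := (F.obj i).str))
  set X' : TopCat := @TopCat.of c.pt (projTop F c) with hX'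
  let c' : Cone F :=
    { pt := X'
      π := { app := fun i => @TopCat.ofHom c.pt (F.obj i) (projTop F c) _ (@ContinuousMap.mk X' (F.obj i) (projTop F c) _ (c.π.app i) (hcont i))
             naturality := fun i j u => by
               ext x
               exact (cone_naturality F c u x).symm } }
  have hφ : ∀ x : X', hc.lift c' x = (x : c.pt) := by
    intro x
    refine eq_of_proj_eq F c hc fun i => ?_
    have h2 : ∀ y : X', (hc.lift c' ≫ c.π.app i) y = (c'.π.app i) y := fun y => by
      rw [hc.fac c' i]
    exact h2 x
  refine le_antisymm (le_iInf fun i => ?_) ?_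
  · exact continuous_iff_le_induced.mp (by exact (c.π.app i).hom.continuous)
  · have hid : @Continuous _ _ (projTop F c) c.pt.str (fun x => x) := by
      have h1 : ⇑(hc.lift c') = fun (x : c.pt) => x := funext hφ
      have h2 := (hc.lift c').hom.continuous
      rwa [h1] at h2
    exact continuous_id_iff_le.mp hid

theorem compactSpace_pt {I : Type*} [Category I]
    (F : I ⥤ TopCat) (hfin : ∀ i, Finite (F.obj i)) (hdisc : ∀ i, DiscreteTopology (F.obj i))
    (c : Cone F) (hc : IsLimit c) : CompactSpace c.pt := by
  haveI := hfin; haveI := hdisc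
  let Φ : c.pt → ∀ i, F.obj i := fun x i => c.π.app i x
  have hind : Topology.IsInducing Φ := by
    constructor
    show c.pt.str = _
    rw [pt_str_eq F c hc]
    rw [Pi.topologicalSpace, induced_iInf]
    exact iInf_congr fun i => (induced_compose (f := Φ) (g := fun p => p i)).symm
  have hinj : Function.Injective Φ := fun x y hxy =>
    eq_of_proj_eq F c hc fun i => congrFun hxy i
  have hemb : Topology.IsEmbedding Φ := ⟨hind, hinj⟩
  let Sec : Set (∀ i, F.obj i) := {p | ∀ (i j : I) (u : i ⟶ j), F.map u (p i) = p j}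
  have hSecClosed : IsClosed Sec := by
    have hS : Sec = ⋂ (i : I) (j : I) (u : i ⟶ j), {p : ∀ i, F.obj i | F.map u (p i) = p j} := by
      ext p; simp [Sec]
    rw [hS]
    exact isClosed_iInter fun i => isClosed_iInter fun j => isClosed_iInter fun u =>
      isClosed_eq ((F.map u).hom.continuous.comp (continuous_apply i)) (continuous_apply j)
  have hrange : Set.range Φ = Sec := by
    apply Set.eq_of_subset_of_subset
    · rintro _ ⟨x, rfl⟩ ; exact fun i j u => cone_naturality F c u x
    · intro p hp
      obtain ⟨z, hz⟩ := exists_point F c hc p (fun {i j} u => hp i j u)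
      exact ⟨z, funext hz⟩
  refine ⟨?_⟩
  rw [hemb.isCompact_iff, Set.image_univ, hrange]
  exact hSecClosed.isCompact

end ProofAux


open ProofAux

/-- Let `S` be a profinite space written as a cofiltered limit
`S = lim_{i ∈ I} S_i` of finite discrete spaces, and let `T` be an arbitrary discrete
topological space. Then the natural map `colim_i C(S_i, T) → C(S, T)` is a bijection:
every continuous map `S → T` factors through some projection `S → S_i` (surjectivity), and
two maps `S_i → T`, `S_j → T` inducing the same map on `S` are equalized after passing to
some common refinement `S_k` (injectivity of the map from the filtered colimit). -/
theorem colimit_continuousMaps_to_discrete_bijective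
    {I : Type*} [Category I] [IsCofiltered I]
    (F : I ⥤ TopCat) (hfin : ∀ i, Finite (F.obj i)) (hdisc : ∀ i, DiscreteTopology (F.obj i))
    (T : Type*) [TopologicalSpace T] [DiscreteTopology T]
    (c : Cone F) (hc : IsLimit c) :
    (∀ f : C(c.pt, T), ∃ (i : I) (g : C(F.obj i, T)), ⇑f = ⇑g ∘ ⇑(c.π.app i)) ∧
    (∀ (i j : I) (g : C(F.obj i, T)) (h : C(F.obj j, T)),
        ⇑g ∘ ⇑(c.π.app i) = ⇑h ∘ ⇑(c.π.app j) →
        ∃ (k : I) (u : k ⟶ i) (v : k ⟶ j), ⇑g ∘ ⇑(F.map u) = ⇑h ∘ ⇑(F.map v)) := by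
  classical
  haveI := hfin; haveI := hdisc
  haveI : CompactSpace c.pt := compactSpace_pt F hfin hdisc c hc
  constructor
  · -- surjectivity
    intro f
    by_cases hne : Nonempty c.pt
    · have key : ∃ i : I, ∀ x y : c.pt, c.π.app i x = c.π.app i y → f x = f y := by
        by_contra hkey
        push_neg at hkey
        let K : I → Set (c.pt × c.pt) := fun i =>
          {p | c.π.app i p.1 = c.π.app i p.2 ∧ f p.1 ≠ f p.2}
        have hKmono : ∀ {i j : I} (u : j ⟶ i), K j ⊆ K i := by
          intro i j u p hp
          refine ⟨?_, hp.2⟩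
          rw [← cone_naturality F c u p.1, ← cone_naturality F c u p.2, hp.1]
        have hdir : Directed (· ⊇ ·) K := fun i j =>
          ⟨IsCofiltered.min i j, hKmono (IsCofiltered.minToLeft i j),
            hKmono (IsCofiltered.minToRight i j)⟩
        have hn : ∀ i, (K i).Nonempty := fun i => by
          obtain ⟨x, y, h1, h2⟩ := hkey i
          exact ⟨(x, y), h1, h2⟩
        have hclosed : ∀ i, IsClosed (K i) := by
          intro i
          have h1 : IsClosed {p : c.pt × c.pt | c.π.app i p.1 = c.π.app i p.2} :=
            isClosed_eq ((c.π.app i).hom.continuous.comp continuous_fst)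
              ((c.π.app i).hom.continuous.comp continuous_snd)
          have h2 : IsClosed {p : c.pt × c.pt | f p.1 ≠ f p.2} := by
            have : IsOpen {p : c.pt × c.pt | f p.1 = f p.2} := by
              have hco : Continuous fun p : c.pt × c.pt => (f p.1, f p.2) :=
                (f.continuous.comp continuous_fst).prodMk (f.continuous.comp continuous_snd)
              have := hco.isOpen_preimage {q : T × T | q.1 = q.2} (isOpen_discrete _)
              exact this
            exact isClosed_compl_iff.mpr this
          exact h1.inter h2
        have hcomp : ∀ i, IsCompact (K i) := fun i => (hclosed i).isCompact
        haveI : Nonempty I := IsCofiltered.nonempty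
        obtain ⟨p, hp⟩ := IsCompact.nonempty_iInter_of_directed_nonempty_isCompact_isClosed
          K hdir hn hcomp hclosed
        have hpp : p.1 = p.2 :=
          eq_of_proj_eq F c hc fun i => (Set.mem_iInter.mp hp i).1
        exact (Set.mem_iInter.mp hp (Classical.arbitrary I)).2 (by rw [hpp])
      obtain ⟨i, hi⟩ := key
      haveI : Nonempty c.pt := hne
      let g : F.obj i → T := fun a =>
        if h : ∃ x : c.pt, c.π.app i x = a then f h.choose else f (Classical.arbitrary c.pt)
      refine ⟨i, ⟨g, continuous_of_discreteTopology⟩, ?_⟩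
      funext x
      show f x = g (c.π.app i x)
      have hex : ∃ y : c.pt, c.π.app i y = c.π.app i x := ⟨x, rfl⟩
      simp only [g, dif_pos hex]
      exact (hi _ _ hex.choose_spec).symm
    · rw [not_nonempty_iff] at hne
      have hemp : ∃ i, IsEmpty (F.obj i) := by
        by_contra hcon
        push_neg at hcon
        haveI : ∀ i, Nonempty ((F ⋙ forget TopCat).obj i) := fun i =>
          hcon i
        haveI : ∀ i, Finite ((F ⋙ forget TopCat).obj i) := fun i => hfin i
        obtain ⟨s, hs⟩ := nonempty_sections_of_finite_cofiltered_system (F ⋙ forget TopCat)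
        obtain ⟨z, -⟩ := exists_point F c hc s (fun {i j} u => hs u)
        exact hne.elim z
      obtain ⟨i, hi⟩ := hemp
      refine ⟨i, ⟨fun a => hi.elim a, continuous_of_discreteTopology⟩,
        funext fun x => hne.elim x⟩
  · -- injectivity
    intro i j g h hgh
    let k0 := IsCofiltered.min i j
    let u0 : k0 ⟶ i := IsCofiltered.minToLeft i j
    let v0 : k0 ⟶ j := IsCofiltered.minToRight i j
    let a : F.obj k0 → T := fun x => g (F.map u0 x)
    let b : F.obj k0 → T := fun x => h (F.map v0 x)
    have hab : ∀ z : c.pt, a (c.π.app k0 z) = b (c.π.app k0 z) := by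
      intro z
      show g (F.map u0 (c.π.app k0 z)) = h (F.map v0 (c.π.app k0 z))
      rw [cone_naturality F c u0 z, cone_naturality F c v0 z]
      exact congrFun hgh z
    suffices hsuff : ∃ (k : I) (w : k ⟶ k0), ∀ x, a (F.map w x) = b (F.map w x) by
      obtain ⟨k, w, hw⟩ := hsuff
      refine ⟨k, w ≫ u0, w ≫ v0, ?_⟩
      funext x
      show g (F.map (w ≫ u0) x) = h (F.map (w ≫ v0) x)
      have e1 : F.map (w ≫ u0) x = F.map u0 (F.map w x) := by rw [F.map_comp]; rfl
      have e2 : F.map (w ≫ v0) x = F.map v0 (F.map w x) := by rw [F.map_comp]; rfl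
      rw [e1, e2]
      exact hw x
    by_contra hcon
    push_neg at hcon
    have hcon' := hcon
    have hkey : ∀ {w w' : Over k0} (m : w ⟶ w') (x : F.obj w.left),
        F.map w'.hom (F.map m.left x) = F.map w.hom x := by
      intro w w' m x
      have h1 : F.map m.left ≫ F.map w'.hom = F.map w.hom := by
        rw [← F.map_comp, Over.w m]
      have h2 : ∀ y : F.obj w.left, (F.map m.left ≫ F.map w'.hom) y = F.map w.hom y :=
        fun y => by rw [h1]
      exact h2 x
    let H : Over k0 ⥤ Type _ :=
      { obj := fun w => {x : F.obj w.left // a (F.map w.hom x) ≠ b (F.map w.hom x)}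
        map := fun {w w'} m => TypeCat.ofHom fun x => ⟨F.map m.left x.1, by rw [hkey m x.1]; exact x.2⟩
        map_id := fun w => by
          refine ConcreteCategory.hom_ext _ _ fun x => ?_
          apply Subtype.ext
          show F.map (𝟙 w.left) x.1 = x.1
          rw [F.map_id]
          rfl
        map_comp := fun {w w' w''} m m' => by
          refine ConcreteCategory.hom_ext _ _ fun x => ?_
          apply Subtype.ext
          show F.map (m.left ≫ m'.left) x.1 = F.map m'.left (F.map m.left x.1)
          rw [F.map_comp]
          rfl }
    haveI : ∀ w, Finite (H.obj w) := fun w => Subtype.finite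
    haveI : ∀ w, Nonempty (H.obj w) := fun w => by
      obtain ⟨x, hx⟩ := hcon' w.left w.hom
      exact ⟨⟨x, hx⟩⟩
    obtain ⟨s, hs⟩ := nonempty_sections_of_finite_cofiltered_system H
    let cW := c.whisker (Over.forget k0)
    have hcW : IsLimit cW := (Functor.Initial.isLimitWhiskerEquiv (Over.forget k0) c).symm hc
    obtain ⟨z, hz⟩ := exists_point (Over.forget k0 ⋙ F) cW hcW (fun w => (s w).1)
      (fun {w w'} m => congrArg Subtype.val (hs m))
    have h2 : c.π.app k0 z = (s (Over.mk (𝟙 k0))).1 := hz (Over.mk (𝟙 k0))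
    apply (s (Over.mk (𝟙 k0))).2
    show a (F.map (𝟙 k0) (s (Over.mk (𝟙 k0))).1) = b (F.map (𝟙 k0) (s (Over.mk (𝟙 k0))).1)
    rw [F.map_id]
    show a (s (Over.mk (𝟙 k0))).1 = b (s (Over.mk (𝟙 k0))).1
    rw [← h2]
    exact hab z
end

section
/- Let T be a profinite space, Λ a discrete ring and M a discrete Λ-module. Then the natural map C(T, Λ) ⊗_Λ M → C(T, M), sending f ⊗ x to the function t ↦ f(t)·x, is an isomorphism of C(T, Λ)-modules (where C denotes continuous maps, C(T,Λ) is a ring under pointwise operations, and C(T,M) a module under pointwise scalar multiplication). -/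
set_option linter.unusedVariables false

open scoped TensorProduct

section
variable {T : Type*} [TopologicalSpace T] [CompactSpace T] [T2Space T]
  [TotallyDisconnectedSpace T]
variable {Λ : Type*} [CommRing Λ] [TopologicalSpace Λ] [DiscreteTopology Λ]
variable {M : Type*} [AddCommGroup M] [Module Λ M] [TopologicalSpace M] [DiscreteTopology M]

instance : ContinuousAdd M := ⟨continuous_of_discreteTopology⟩
instance : ContinuousConstSMul Λ M := ⟨fun _ => continuous_of_discreteTopology⟩
instance : ContinuousSMul Λ M := ⟨continuous_of_discreteTopology⟩
instance : IsTopologicalRing Λ where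
  continuous_add := continuous_of_discreteTopology
  continuous_mul := continuous_of_discreteTopology
  continuous_neg := continuous_of_discreteTopology

/-- The natural `Λ`-bilinear map `C(T, Λ) × M → C(T, M)`, `(f, x) ↦ (t ↦ f t • x)`. -/
noncomputable def contMapSMulBilin : C(T, Λ) →ₗ[Λ] M →ₗ[Λ] C(T, M) :=
  LinearMap.mk₂ Λ
    (fun f x => ContinuousMap.mk (fun t => f t • x)
      ((continuous_of_discreteTopology (f := fun a : Λ => a • x)).comp f.continuous))
    (fun f g x => ContinuousMap.ext fun t => add_smul (f t) (g t) x)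
    (fun c f x => ContinuousMap.ext fun t => mul_smul c (f t) x)
    (fun f x y => ContinuousMap.ext fun t => smul_add (f t) x y)
    (fun c f x => ContinuousMap.ext fun t => smul_comm (f t) c x)

/-- The natural map `C(T, Λ) ⊗[Λ] M → C(T, M)`. -/
noncomputable def contMapTensorEquivMap : C(T, Λ) ⊗[Λ] M →ₗ[Λ] C(T, M) :=
  TensorProduct.lift contMapSMulBilin

instance : ContinuousNeg M := ⟨continuous_of_discreteTopology⟩
instance : IsTopologicalAddGroup M where
  continuous_neg := continuous_of_discreteTopology


open scoped Classical in
/-- The indicator function of a clopen set, as a continuous map to `Λ`. -/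
noncomputable def indC (U : Set T) (hU : IsClopen U) : C(T, Λ) :=
  ⟨fun t => if t ∈ U then 1 else 0, by
    classical
    apply IsLocallyConstant.continuous
    intro s
    by_cases h1 : (1 : Λ) ∈ s <;> by_cases h0 : (0 : Λ) ∈ s
    · convert isOpen_univ using 1
      ext t; by_cases h : t ∈ U <;> simp [h, h1, h0]
    · convert hU.isOpen using 1
      ext t; by_cases h : t ∈ U <;> simp [h, h1, h0]
    · convert hU.compl.isOpen using 1
      ext t; by_cases h : t ∈ U <;> simp [h, h1, h0]
    · convert isOpen_empty using 1
      ext t; by_cases h : t ∈ U <;> simp [h, h1, h0]⟩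

open scoped Classical in
lemma indC_apply (U : Set T) (hU : IsClopen U) (t : T) :
    indC (Λ := Λ) U hU t = if t ∈ U then 1 else 0 := rfl

lemma contMapTensorEquivMap_tmul_apply (f : C(T, Λ)) (m : M) (t : T) :
    contMapTensorEquivMap (f ⊗ₜ[Λ] m) t = f t • m := by
  simp [contMapTensorEquivMap, contMapSMulBilin]

/-- For a profinite space `T`, a discrete ring `Λ` and a discrete
`Λ`-module `M`, the natural map `C(T, Λ) ⊗_Λ M → C(T, M)`, `f ⊗ x ↦ (t ↦ f t • x)`, is an
isomorphism of `C(T, Λ)`-modules: it is bijective and `C(T, Λ)`-linear. -/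
theorem contMap_tensor_discrete_module_iso :
    Function.Bijective (contMapTensorEquivMap (T := T) (Λ := Λ) (M := M)) ∧
      ∀ (c : C(T, Λ)) (z : C(T, Λ) ⊗[Λ] M),
        contMapTensorEquivMap (c • z) = c • contMapTensorEquivMap z := by
  classical
  constructor
  · constructor
    · -- injectivity
      suffices h : ∀ z : C(T, Λ) ⊗[Λ] M, contMapTensorEquivMap z = 0 → z = 0 by
        intro x y hxy
        have : contMapTensorEquivMap (x - y) = 0 := by rw [map_sub, hxy, sub_self]
        exact sub_eq_zero.mp (h _ this)
      intro z hz
      obtain ⟨s, rfl⟩ := TensorProduct.exists_finset z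
      set E : C(T, ↥s → Λ) :=
        ⟨fun t p => (↑p : C(T, Λ) × M).1 t,
          continuous_pi fun p => (↑p : C(T, Λ) × M).1.continuous⟩ with hEdef
      have hclopen : ∀ v : ↥s → Λ, IsClopen (E ⁻¹' {v}) :=
        fun v => (isClopen_discrete {v}).preimage E.continuous
      have hfin : (Set.range E).Finite := (isCompact_range E.continuous).finite_of_discrete
      set Rf : Finset (↥s → Λ) := hfin.toFinset with hRf
      set χ : (↥s → Λ) → C(T, Λ) := fun v => indC (E ⁻¹' {v}) (hclopen v) with hχ
      have hχapp : ∀ v t, χ v t = if E t = v then 1 else 0 := by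
        intro v t
        simp [hχ, indC_apply, Set.mem_preimage, Set.mem_singleton_iff]
      have hmemR : ∀ t : T, E t ∈ Rf := by
        intro t; rw [hRf, Set.Finite.mem_toFinset]; exact ⟨t, rfl⟩
      set n : (↥s → Λ) → M :=
        fun v => ∑ p ∈ s.attach, v p • (↑p : C(T, Λ) × M).2 with hn
      have hrep : ∀ p : ↥s, (↑p : C(T, Λ) × M).1 = ∑ v ∈ Rf, v p • χ v := by
        intro p
        ext t
        rw [ContinuousMap.coe_sum, Finset.sum_apply]
        rw [Finset.sum_eq_single (E t)]
        · simp [hχapp]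
          rfl
        · intro v _ hv
          simp [hχapp, hv, Ne.symm hv]
        · intro h; exact absurd (hmemR t) h
      have hzsum : ∑ p ∈ s, p.1 ⊗ₜ[Λ] p.2 = ∑ v ∈ Rf, χ v ⊗ₜ[Λ] n v := by
        rw [← Finset.sum_attach s (fun p => p.1 ⊗ₜ[Λ] p.2)]
        calc ∑ p ∈ s.attach, (↑p : C(T, Λ) × M).1 ⊗ₜ[Λ] (↑p : C(T, Λ) × M).2
            = ∑ p ∈ s.attach, (∑ v ∈ Rf, v p • χ v) ⊗ₜ[Λ] (↑p : C(T, Λ) × M).2 := by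
              refine Finset.sum_congr rfl fun p _ => ?_
              rw [← hrep p]
          _ = ∑ p ∈ s.attach, ∑ v ∈ Rf, χ v ⊗ₜ[Λ] (v p • (↑p : C(T, Λ) × M).2) := by
              refine Finset.sum_congr rfl fun p _ => ?_
              rw [TensorProduct.sum_tmul]
              refine Finset.sum_congr rfl fun v _ => ?_
              rw [TensorProduct.smul_tmul]
          _ = ∑ v ∈ Rf, ∑ p ∈ s.attach, χ v ⊗ₜ[Λ] (v p • (↑p : C(T, Λ) × M).2) :=
              Finset.sum_comm
          _ = ∑ v ∈ Rf, χ v ⊗ₜ[Λ] n v := by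
              refine Finset.sum_congr rfl fun v _ => ?_
              rw [hn, TensorProduct.tmul_sum]
      rw [hzsum] at hz ⊢
      have hnzero : ∀ v ∈ Rf, n v = 0 := by
        intro v hv
        rw [hRf, Set.Finite.mem_toFinset] at hv
        obtain ⟨t, ht⟩ := hv
        have := congrArg (fun g : C(T, M) => g t) hz
        simp only [map_sum, ContinuousMap.coe_sum, Finset.sum_apply,
          ContinuousMap.zero_apply] at this
        rw [Finset.sum_eq_single v] at this
        · rwa [contMapTensorEquivMap_tmul_apply, hχapp, ht, if_pos rfl, one_smul] at this
        · intro w _ hw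
          rw [contMapTensorEquivMap_tmul_apply, hχapp, ht, if_neg (Ne.symm hw), zero_smul]
        · intro h
          exact absurd (ht ▸ hmemR t) h
      calc ∑ v ∈ Rf, χ v ⊗ₜ[Λ] n v = ∑ v ∈ Rf, (0 : C(T, Λ) ⊗[Λ] M) := by
            refine Finset.sum_congr rfl fun v hv => ?_
            rw [hnzero v hv, TensorProduct.tmul_zero]
        _ = 0 := Finset.sum_const_zero
    · -- surjectivity
      intro g
      have hfin : (Set.range g).Finite := (isCompact_range g.continuous).finite_of_discrete
      have hclopen : ∀ m : M, IsClopen (g ⁻¹' {m}) :=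
        fun m => (isClopen_discrete {m}).preimage g.continuous
      refine ⟨∑ m ∈ hfin.toFinset, indC (g ⁻¹' {m}) (hclopen m) ⊗ₜ[Λ] m, ?_⟩
      ext t
      rw [map_sum, ContinuousMap.coe_sum, Finset.sum_apply]
      rw [Finset.sum_eq_single (g t)]
      · rw [contMapTensorEquivMap_tmul_apply, indC_apply]
        simp
      · intro m _ hm
        rw [contMapTensorEquivMap_tmul_apply, indC_apply]
        simp [Ne.symm hm, hm]
      · intro h
        exact absurd (hfin.mem_toFinset.mpr ⟨t, rfl⟩) h
  · -- C(T,Λ)-linearity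
    intro c z
    induction z using TensorProduct.induction_on with
    | zero => simp
    | tmul f m =>
      rw [TensorProduct.smul_tmul']
      ext t
      simp [contMapTensorEquivMap_tmul_apply, smul_eq_mul, mul_smul]
    | add x y hx hy =>
      rw [smul_add, map_add, map_add, hx, hy, smul_add]


end
end

section
/- Let R be a valuation ring, a ∈ R a nonzero element, and M a torsion-free R-module (equivalently, a flat R-module). Then M/aM is a flat module over R/aR. -/
set_option linter.unusedVariables false

open TensorProduct

/-- Over a valuation ring (a Bézout domain), torsion-free modules are flat. -/
theorem flat_of_noZeroSMulDivisors_over_valuationRing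
    {R : Type*} [CommRing R] [IsDomain R] [ValuationRing R]
    {M : Type*} [AddCommGroup M] [Module R M] [NoZeroSMulDivisors R M] :
    Module.Flat R M := by
  rw [Module.Flat.iff_rTensor_injective]
  intro I hI
  obtain ⟨b, rfl⟩ := IsBezout.isPrincipal_of_FG I hI
  by_cases hb : b = 0
  · subst hb
    have h0 : (Ideal.span {(0:R)}) = ⊥ := by simp
    rw [Ideal.submodule_span_eq, h0]
    intro x y _
    exact Subsingleton.elim x y
  · have key : (Submodule.span R {b}).subtype ∘ₗ
        (LinearEquiv.toSpanNonzeroSingleton R R b hb : R →ₗ[R] (R ∙ b))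
        = b • LinearMap.id := by
      ext
      show ((LinearEquiv.toSpanNonzeroSingleton R R b hb) 1 : R) = (b • LinearMap.id) (1:R)
      rw [LinearEquiv.toSpanNonzeroSingleton_one]
      simp
    have h1 : Function.Injective (LinearMap.rTensor M ((Submodule.span R {b}).subtype ∘ₗ
        (LinearEquiv.toSpanNonzeroSingleton R R b hb : R →ₗ[R] (R ∙ b)))) := by
      rw [key, LinearMap.rTensor_smul, LinearMap.rTensor_id]
      intro x y hxy
      simp only [LinearMap.smul_apply, LinearMap.id_coe, id_eq] at hxy
      have h2 := congrArg (TensorProduct.lid R M) hxy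
      rw [map_smul, map_smul] at h2
      exact (TensorProduct.lid R M).injective (smul_right_injective M hb h2)
    rw [LinearMap.rTensor_comp, LinearMap.coe_comp] at h1
    exact h1.of_comp_right
      (LinearEquiv.rTensor M (LinearEquiv.toSpanNonzeroSingleton R R b hb)).surjective

/-- Let `R` be a valuation ring, `a ∈ R` a nonzero element and `M` a
torsion-free `R`-module. Then `M/aM` is a flat module over `R/aR`. -/
theorem quotient_flat_of_torsionFree_over_valuationRing
    {R : Type*} [CommRing R] [IsDomain R] [ValuationRing R]
    (a : R) (ha : a ≠ 0)
    {M : Type*} [AddCommGroup M] [Module R M]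
    (htf : ∀ (r : R) (x : M), r • x = 0 → r = 0 ∨ x = 0) :
    Module.Flat (R ⧸ Ideal.span {a})
      (M ⧸ ((Ideal.span {a} : Ideal R) • (⊤ : Submodule R M))) := by
  haveI : NoZeroSMulDivisors R M := ⟨fun {r x} h => htf r x h⟩
  haveI : Module.Flat R M := flat_of_noZeroSMulDivisors_over_valuationRing
  have hsurj : Function.Surjective (algebraMap R (R ⧸ Ideal.span {a})) :=
    Ideal.Quotient.mk_surjective
  exact Module.Flat.of_linearEquiv
    (LinearEquiv.extendScalarsOfSurjective hsurj
      (quotTensorEquivQuotSMul M (Ideal.span {a})).symm)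
end

section
/- Let f : Y → X be a continuous map of compact Hausdorff spaces that is both open and closed. Then the induced map π₀(f) : π₀(Y) → π₀(X) on the spaces of connected components (with the quotient topology) is an open map. -/
set_option linter.unusedVariables false

/-- The preimage under the quotient map of the image of a clopen set is itself. -/
lemma clopen_saturated {X : Type*} [TopologicalSpace X] {W : Set X} (hW : IsClopen W) :
    ((↑) : X → ConnectedComponents X) ⁻¹' (((↑) : X → ConnectedComponents X) '' W) = W := by
  ext x
  constructor
  · rintro ⟨w, hw, hwx⟩
    have : connectedComponent w = connectedComponent x :=
      ConnectedComponents.coe_eq_coe.mp hwx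
    have hx : x ∈ connectedComponent w := this ▸ mem_connectedComponent
    exact hW.connectedComponent_subset hw hx
  · intro hx
    exact ⟨x, hx, rfl⟩

/-- Let `f : Y → X` be a continuous map of compact Hausdorff spaces which
is both open and closed. Then the induced map `π₀(f) : π₀(Y) → π₀(X)` on spaces of
connected components (with the quotient topologies) is an open map. -/
theorem pi0_openMap_of_open_closed
    {Y X : Type*} [TopologicalSpace Y] [CompactSpace Y] [T2Space Y]
    [TopologicalSpace X] [CompactSpace X] [T2Space X]
    (f : Y → X) (hf : Continuous f) (hopen : IsOpenMap f) (hclosed : IsClosedMap f) :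
    IsOpenMap hf.connectedComponentsMap := by
  haveI : CompactSpace (ConnectedComponents Y) := Quotient.compactSpace
  intro U hU
  obtain ⟨S, hS, rfl⟩ := isTopologicalBasis_isClopen.open_eq_sUnion hU
  rw [Set.sUnion_eq_biUnion, Set.image_iUnion₂]
  apply isOpen_biUnion
  intro s hs
  have hsclopen : IsClopen s := hS hs
  set V : Set Y := ((↑) : Y → ConnectedComponents Y) ⁻¹' s with hVdef
  have hV : IsClopen V := hsclopen.preimage ConnectedComponents.continuous_coe
  have hfV : IsClopen (f '' V) := ⟨hclosed V hV.1, hopen V hV.2⟩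
  have hsimg : s = ((↑) : Y → ConnectedComponents Y) '' V :=
    (Set.image_preimage_eq s ConnectedComponents.surjective_coe).symm
  have comp : hf.connectedComponentsMap ∘ ((↑) : Y → ConnectedComponents Y) =
      ((↑) : X → ConnectedComponents X) ∘ f :=
    Continuous.connectedComponentsLift_comp_coe _
  have key : hf.connectedComponentsMap '' s =
      ((↑) : X → ConnectedComponents X) '' (f '' V) := by
    rw [hsimg, ← Set.image_comp, comp, Set.image_comp]
  rw [key]
  rw [ConnectedComponents.isQuotientMap_coe.isOpen_preimage.symm, clopen_saturated hfV]
  exact hfV.2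
end

section
/- Let (Y_i)_{i∈I} be a cofiltered inverse system of compact Hausdorff spaces with limit Y = lim_i Y_i. Then the natural continuous map π₀(Y) → lim_i π₀(Y_i) is a homeomorphism, i.e. the connected-components functor commutes with cofiltered limits of compact Hausdorff spaces. -/
set_option linter.unusedVariables false
set_option maxHeartbeats 1000000

open CategoryTheory Limits

/-- The canonical map `π₀(lim Y_i) → ∏ π₀(Y_i)` induced by the projections of a cone. -/
def pi0ConeMap {I : Type*} [Category I] (F : I ⥤ TopCat) (c : Cone F) :
    ConnectedComponents c.pt → ((i : I) → ConnectedComponents (F.obj i)) :=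
  fun z i => (c.π.app i).hom.continuous.connectedComponentsMap z

section Pi0Aux

universe w v u

open Topology TopologicalSpace Set

namespace Pi0Aux

variable {I : Type u} [Category.{v} I]

abbrev Arrows (G : Finset I) := Σ' (X Y : I) (_ : X ∈ G) (_ : Y ∈ G), X ⟶ Y

abbrev Diag (I : Type u) [Category.{v} I] := Σ G : Finset I, Finset (Arrows G)

variable (F : I ⥤ TopCat.{w})

/-- The set of "sections through the `A i`". -/
def secsIn (A : ∀ i, Set (F.obj i)) : Set (∀ i, F.obj i) :=
  {v | (∀ i, v i ∈ A i) ∧ ∀ ⦃i j : I⦄ (f : i ⟶ j), F.map f (v i) = v j}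

theorem core [IsCofiltered I]
    (hcompact : ∀ i, CompactSpace (F.obj i)) (ht2 : ∀ i, T2Space (F.obj i))
    (A : ∀ i, Set (F.obj i)) (hne : ∀ i, (A i).Nonempty) (hcl : ∀ i, IsClosed (A i))
    (hconn : ∀ i, IsPreconnected (A i))
    (hmap : ∀ ⦃i j : I⦄ (f : i ⟶ j), F.map f '' A i ⊆ A j) :
    (secsIn F A).Nonempty ∧ IsPreconnected (secsIn F A) := by
  classical
  haveI : ∀ i, CompactSpace (F.obj i) := hcompact
  haveI : ∀ i, T2Space (F.obj i) := ht2
  -- partial sections through the `A i`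
  set L : Diag I → Set (∀ i, F.obj i) := fun D =>
    {v | (∀ i, v i ∈ A i) ∧ ∀ g : Arrows D.1, g ∈ D.2 → F.map g.2.2.2.2 (v g.1) = v g.2.1}
    with hL
  have hAmem : ∀ ⦃i j : I⦄ (f : i ⟶ j) {a}, a ∈ A i → F.map f a ∈ A j :=
    fun i j f a ha => hmap f (Set.mem_image_of_mem _ ha)
  -- the connecting map from a cone object
  let k : ∀ D : Diag I, I := fun D => IsCofiltered.inf D.1 D.2
  let ψ : ∀ D : Diag I, F.obj (k D) × (∀ j, F.obj j) → ∀ j, F.obj j := fun D p j =>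
    if h : j ∈ D.1 then F.map (IsCofiltered.infTo D.1 D.2 h) p.1 else p.2 j
  have hψcont : ∀ D, Continuous (ψ D) := by
    intro D
    apply continuous_pi
    intro j
    by_cases h : j ∈ D.1
    · simp only [ψ, dif_pos h]
      exact (F.map _).hom.continuous.comp continuous_fst
    · simp only [ψ, dif_neg h]
      exact (continuous_apply j).comp continuous_snd
  have hψL : ∀ D : Diag I, ψ D '' (A (k D) ×ˢ Set.univ.pi A) ⊆ L D := by
    rintro D _ ⟨⟨b, w⟩, ⟨hb, hw⟩, rfl⟩
    constructor
    · intro j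
      by_cases h : j ∈ D.1
      · simp only [ψ, dif_pos h]
        exact hAmem _ hb
      · simp only [ψ, dif_neg h]
        exact hw j (Set.mem_univ j)
    · rintro ⟨X, Y, hX, hY, f⟩ hf
      simp only [ψ, dif_pos hX, dif_pos hY]
      rw [← TopCat.comp_app, ← F.map_comp,
        @IsCofiltered.infTo_commutes _ _ _ D.1 D.2 _ _ hX hY f hf]
  have hsub : ∀ D : Diag I, secsIn F A ⊆ ψ D '' (A (k D) ×ˢ Set.univ.pi A) := by
    intro D v hv
    refine ⟨⟨v (k D), v⟩, ⟨hv.1 (k D), fun j _ => hv.1 j⟩, ?_⟩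
    funext j
    by_cases h : j ∈ D.1
    · simp only [ψ, dif_pos h]
      exact hv.2 _
    · simp only [ψ, dif_neg h]
  have hLne : ∀ D : Diag I, (L D).Nonempty := by
    intro D
    refine ⟨ψ D ⟨(hne (k D)).choose, fun j => (hne j).choose⟩, hψL D ?_⟩
    exact Set.mem_image_of_mem _ ⟨(hne (k D)).choose_spec, fun j _ => (hne j).choose_spec⟩
  have hLcl : ∀ D : Diag I, IsClosed (L D) := by
    intro D
    have : L D = (⋂ i, (fun v : ∀ i, F.obj i => v i) ⁻¹' A i) ∩
        ⋂ (g : Arrows D.1) (_ : g ∈ D.2),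
          {v : ∀ i, F.obj i | F.map g.2.2.2.2 (v g.1) = v g.2.1} := by
      ext v
      simp only [hL, Set.mem_setOf_eq, Set.mem_inter_iff, Set.mem_iInter, Set.mem_preimage]
    rw [this]
    refine IsClosed.inter (isClosed_iInter fun i => (hcl i).preimage (continuous_apply i)) ?_
    refine isClosed_iInter fun g => isClosed_iInter fun _ => ?_
    exact isClosed_eq ((F.map _).hom.continuous.comp (continuous_apply _)) (continuous_apply _)
  have hLdir : Directed (· ⊇ ·) L := by
    intro D1 D2
    let ιA : Arrows D1.1 → Arrows (D1.1 ∪ D2.1) := fun g =>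
      ⟨g.1, g.2.1, Finset.mem_union_left _ g.2.2.1, Finset.mem_union_left _ g.2.2.2.1, g.2.2.2.2⟩
    let ιB : Arrows D2.1 → Arrows (D1.1 ∪ D2.1) := fun g =>
      ⟨g.1, g.2.1, Finset.mem_union_right _ g.2.2.1, Finset.mem_union_right _ g.2.2.2.1, g.2.2.2.2⟩
    refine ⟨⟨D1.1 ∪ D2.1, D1.2.image ιA ∪ D2.2.image ιB⟩, ?_, ?_⟩
    · rintro v ⟨hv1, hv2⟩
      refine ⟨hv1, fun g hg => ?_⟩
      exact hv2 (ιA g) (Finset.mem_union_left _ (Finset.mem_image_of_mem ιA hg))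
    · rintro v ⟨hv1, hv2⟩
      refine ⟨hv1, fun g hg => ?_⟩
      exact hv2 (ιB g) (Finset.mem_union_right _ (Finset.mem_image_of_mem ιB hg))
  have hLinter : ⋂ D, L D = secsIn F A := by
    apply Set.Subset.antisymm
    · intro v hv
      simp only [Set.mem_iInter] at hv
      refine ⟨fun i => (hv ⟨∅, ∅⟩).1 i, fun i j f => ?_⟩
      have := hv ⟨{i, j}, {⟨i, j, by simp, by simp, f⟩}⟩
      exact this.2 _ (Finset.mem_singleton_self _)
    · intro v hv
      simp only [Set.mem_iInter]
      exact fun D => ⟨hv.1, fun g _ => hv.2 g.2.2.2.2⟩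
  have hLcp : ∀ D : Diag I, IsCompact (L D) := fun D => (hLcl D).isCompact
  constructor
  · rw [← hLinter]
    exact IsCompact.nonempty_iInter_of_directed_nonempty_isCompact_isClosed
      (hι := ⟨⟨∅, ∅⟩⟩) L hLdir hLne hLcp hLcl
  · -- preconnectedness
    intro O₁ O₂ hO₁ hO₂ hcov ⟨a, haT, haO⟩ ⟨b, hbT, hbO⟩
    by_contra hempty
    rw [Set.not_nonempty_iff_eq_empty] at hempty
    set T := secsIn F A
    have hTcl : IsClosed T := by rw [← hLinter]; exact isClosed_iInter hLcl
    have hU : T ∩ O₁ = T \ O₂ := by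
      apply Set.Subset.antisymm
      · rintro v ⟨hvT, hv1⟩
        refine ⟨hvT, fun hv2 => ?_⟩
        exact absurd hempty (Set.nonempty_iff_ne_empty.mp ⟨v, hvT, hv1, hv2⟩)
      · rintro v ⟨hvT, hv2⟩
        rcases hcov hvT with h | h
        · exact ⟨hvT, h⟩
        · exact absurd h hv2
    have hV : T ∩ O₂ = T \ O₁ := by
      apply Set.Subset.antisymm
      · rintro v ⟨hvT, hv2⟩
        refine ⟨hvT, fun hv1 => ?_⟩
        exact absurd hempty (Set.nonempty_iff_ne_empty.mp ⟨v, hvT, hv1, hv2⟩)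
      · rintro v ⟨hvT, hv1⟩
        rcases hcov hvT with h | h
        · exact absurd h hv1
        · exact ⟨hvT, h⟩
    have hUcl : IsClosed (T ∩ O₁) := by rw [hU]; exact hTcl.sdiff hO₂
    have hVcl : IsClosed (T ∩ O₂) := by rw [hV]; exact hTcl.sdiff hO₁
    have hdisj : Disjoint (T ∩ O₁) (T ∩ O₂) := by
      rw [Set.disjoint_iff_inter_eq_empty]
      have hss : (T ∩ O₁) ∩ (T ∩ O₂) ⊆ T ∩ (O₁ ∩ O₂) :=
        fun v hv => ⟨hv.1.1, hv.1.2, hv.2.2⟩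
      rw [hempty] at hss
      exact Set.subset_empty_iff.mp hss
    obtain ⟨W₁, W₂, hW₁, hW₂, hUW, hVW, hWdisj⟩ :=
      SeparatedNhds.of_isCompact_isCompact hUcl.isCompact hVcl.isCompact hdisj
    -- some partial-section set is contained in `W₁ ∪ W₂`
    have : ∃ D : Diag I, L D ⊆ W₁ ∪ W₂ := by
      by_contra hno
      push_neg at hno
      have hCne : ∀ D : Diag I, (L D \ (W₁ ∪ W₂)).Nonempty := by
        intro D
        obtain ⟨v, hv, hv'⟩ := Set.not_subset.mp (hno D)
        exact ⟨v, hv, hv'⟩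
      have hCcl : ∀ D : Diag I, IsClosed (L D \ (W₁ ∪ W₂)) :=
        fun D => (hLcl D).sdiff (hW₁.union hW₂)
      have hCdir : Directed (· ⊇ ·) (fun D => L D \ (W₁ ∪ W₂)) := by
        intro D1 D2
        obtain ⟨D3, h1, h2⟩ := hLdir D1 D2
        exact ⟨D3, Set.diff_subset_diff_left h1, Set.diff_subset_diff_left h2⟩
      obtain ⟨v, hv⟩ := IsCompact.nonempty_iInter_of_directed_nonempty_isCompact_isClosed
        (hι := ⟨⟨∅, ∅⟩⟩) _ hCdir hCne (fun D => (hCcl D).isCompact) hCcl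
      simp only [Set.mem_iInter, Set.mem_diff] at hv
      have hvT : v ∈ T := by
        rw [← hLinter]
        exact Set.mem_iInter.mpr fun D => (hv D).1
      rcases hcov hvT with h | h
      · exact (hv ⟨∅, ∅⟩).2 (Set.mem_union_left _ (hUW ⟨hvT, h⟩))
      · exact (hv ⟨∅, ∅⟩).2 (Set.mem_union_right _ (hVW ⟨hvT, h⟩))
    obtain ⟨D, hD⟩ := this
    -- the connected set `M = ψ D '' (A (k D) ×ˢ univ.pi A)` gives a contradiction
    have hMpre : IsPreconnected (ψ D '' (A (k D) ×ˢ Set.univ.pi A)) := by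
      refine IsPreconnected.image ?_ _ (hψcont D).continuousOn
      exact (hconn (k D)).prod (isPreconnected_univ_pi hconn)
    have hMsub : ψ D '' (A (k D) ×ˢ Set.univ.pi A) ⊆ W₁ ∪ W₂ :=
      fun v hv => hD (hψL D hv)
    have h1 : (ψ D '' (A (k D) ×ˢ Set.univ.pi A) ∩ W₁).Nonempty :=
      ⟨a, hsub D haT, hUW ⟨haT, haO⟩⟩
    have h2 : (ψ D '' (A (k D) ×ˢ Set.univ.pi A) ∩ W₂).Nonempty :=
      ⟨b, hsub D hbT, hVW ⟨hbT, hbO⟩⟩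
    obtain ⟨v, _, hv⟩ := hMpre W₁ W₂ hW₁ hW₂ hMsub h1 h2
    exact Set.disjoint_iff.mp hWdisj hv

variable {F}

theorem cone_nat (c : Cone F) {i j : I} (f : i ⟶ j) (z : c.pt) :
    F.map f (c.π.app i z) = c.π.app j z :=
  ConcreteCategory.congr_hom (c.w f) z

/-- The cone over `F` with point `PUnit` determined by a section. -/
def punitCone (v : ∀ i, F.obj i) (hv : ∀ ⦃i j : I⦄ (f : i ⟶ j), F.map f (v i) = v j) :
    Cone F where
  pt := TopCat.of PUnit.{w + 1}
  π :=
    { app := fun i => TopCat.ofHom (ContinuousMap.mk (fun _ => v i) continuous_const)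
      naturality := fun i j f => by
        ext x
        exact (hv f).symm }

theorem sep {c : Cone F} (hc : IsLimit c) (z z' : c.pt)
    (h : ∀ i, c.π.app i z = c.π.app i z') : z = z' := by
  have hv : ∀ ⦃i j : I⦄ (f : i ⟶ j), F.map f (c.π.app i z) = c.π.app j z :=
    fun i j f => cone_nat c f z
  let P := punitCone (fun i => c.π.app i z) hv
  let g : P.pt ⟶ c.pt := TopCat.ofHom (ContinuousMap.mk (fun _ => z) continuous_const)
  let g' : P.pt ⟶ c.pt := TopCat.ofHom (ContinuousMap.mk (fun _ => z') continuous_const)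
  have hg : ∀ i, g ≫ c.π.app i = P.π.app i := fun i => by ext x; rfl
  have hg' : ∀ i, g' ≫ c.π.app i = P.π.app i := fun i => by ext x; exact (h i).symm
  have : g = g' := (hc.uniq P g hg).trans (hc.uniq P g' hg').symm
  exact ConcreteCategory.congr_hom this PUnit.unit

theorem exists_of_section {c : Cone F} (hc : IsLimit c) (v : ∀ i, F.obj i)
    (hv : ∀ ⦃i j : I⦄ (f : i ⟶ j), F.map f (v i) = v j) :
    ∃ z : c.pt, ∀ i, c.π.app i z = v i :=
  ⟨hc.lift (punitCone v hv) PUnit.unit,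
    fun i => ConcreteCategory.congr_hom (hc.fac (punitCone v hv) i) PUnit.unit⟩

theorem str_eq {c : Cone F} (hc : IsLimit c) :
    (inferInstance : TopologicalSpace c.pt) =
      ⨅ i, TopologicalSpace.induced (fun z : c.pt => c.π.app i z) inferInstance := by
  refine le_antisymm (le_iInf fun i => continuous_iff_le_induced.mp (c.π.app i).hom.continuous) ?_
  let t := ⨅ i, TopologicalSpace.induced (fun z : c.pt => c.π.app i z) inferInstance
  let X : TopCat.{w} := @TopCat.of (↥c.pt) t
  let D : Cone F :=
    { pt := X
      π :=
        { app := fun i => TopCat.ofHom (ContinuousMap.mk (c.π.app i)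
            (continuous_iInf_dom (i := i) continuous_induced_dom))
          naturality := fun i j f => by
            ext z
            exact (cone_nat c f z).symm } }
  let m : X ⟶ c.pt := hc.lift D
  have hm : ∀ z : ↥X, m z = z := fun z =>
    sep hc _ _ (fun i => ConcreteCategory.congr_hom (hc.fac D i) z)
  have hcont : @Continuous (↥c.pt) (↥c.pt) t c.pt.str (fun z => m z) := @ContinuousMap.continuous_toFun (↥c.pt) (↥c.pt) t c.pt.str m.hom
  have hid : (fun z => m z) = (id : ↥c.pt → ↥c.pt) := funext hm
  exact continuous_id_iff_le.mp (hid ▸ hcont)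

theorem inducing_pi {c : Cone F} (hc : IsLimit c) :
    IsInducing (fun (z : c.pt) (i : I) => c.π.app i z) := by
  constructor
  rw [induced_to_pi]
  exact str_eq hc

end Pi0Aux

end Pi0Aux

/-- For a cofiltered inverse system of compact Hausdorff spaces with limit
`Y = lim_i Y_i`, the natural continuous map `π₀(Y) → lim_i π₀(Y_i)` is a homeomorphism:
the canonical map from `π₀(Y)` to the product of the `π₀(Y_i)` is a topological embedding
whose range is exactly the subspace of compatible families, i.e. the topological limit
`lim_i π₀(Y_i)`. -/
theorem connectedComponents_commutes_with_cofiltered_limits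
    {I : Type*} [Category I] [IsCofiltered I] (F : I ⥤ TopCat)
    (hcompact : ∀ i, CompactSpace (F.obj i))
    (ht2 : ∀ i, T2Space (F.obj i))
    (c : Cone F) (hc : IsLimit c) :
    Topology.IsEmbedding (pi0ConeMap F c) ∧
    Set.range (pi0ConeMap F c) =
      {u : (i : I) → ConnectedComponents (F.obj i) |
        ∀ (i j : I) (f : i ⟶ j), (F.map f).hom.continuous.connectedComponentsMap (u i) = u j} := by
  classical
  haveI : ∀ i, CompactSpace (F.obj i) := hcompact
  haveI : ∀ i, T2Space (F.obj i) := ht2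
  haveI hccq : ∀ X : TopCat, CompactSpace X → CompactSpace (ConnectedComponents X) :=
    fun X hX => inferInstanceAs (CompactSpace (_root_.Quotient _))
  set e : c.pt → ∀ i, F.obj i := fun z i => c.π.app i z with he
  have hind : Topology.IsInducing e := Pi0Aux.inducing_pi hc
  -- range of `e` is the set of sections
  have hrange : Set.range e =
      {v : ∀ i, F.obj i | ∀ ⦃i j : I⦄ (f : i ⟶ j), F.map f (v i) = v j} := by
    apply Set.Subset.antisymm
    · rintro _ ⟨z, rfl⟩ i j f
      exact Pi0Aux.cone_nat c f z
    · intro v hv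
      obtain ⟨z, hz⟩ := Pi0Aux.exists_of_section hc v hv
      exact ⟨z, funext hz⟩
  have hrange_cl : IsClosed (Set.range e) := by
    rw [hrange]
    have : {v : ∀ i, F.obj i | ∀ ⦃i j : I⦄ (f : i ⟶ j), F.map f (v i) = v j} =
        ⋂ (i : I) (j : I) (f : i ⟶ j), {v : ∀ i, F.obj i | F.map f (v i) = v j} := by
      ext v
      simp only [Set.mem_setOf_eq, Set.mem_iInter]
    rw [this]
    refine isClosed_iInter fun i => isClosed_iInter fun j => isClosed_iInter fun f => ?_
    exact isClosed_eq ((F.map f).hom.continuous.comp (continuous_apply i)) (continuous_apply j)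
  haveI hcpt : CompactSpace c.pt := by
    refine ⟨hind.isCompact_iff.mpr ?_⟩
    rw [Set.image_univ]
    exact hrange_cl.isCompact
  haveI : CompactSpace (ConnectedComponents ↥c.pt) := hccq c.pt hcpt
  -- injectivity
  have hinj : Function.Injective (pi0ConeMap F c) := by
    intro z z' h
    obtain ⟨y, rfl⟩ := ConnectedComponents.surjective_coe z
    obtain ⟨y', rfl⟩ := ConnectedComponents.surjective_coe z'
    have hyy' : ∀ i, (c.π.app i y : ConnectedComponents (F.obj i)) = c.π.app i y' :=
      fun i => congrFun h i
    -- the components of the projections of `y'`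
    set A : ∀ i, Set (F.obj i) := fun i => connectedComponent (c.π.app i y') with hA
    have hmapA : ∀ ⦃i j : I⦄ (f : i ⟶ j), F.map f '' A i ⊆ A j := by
      intro i j f
      refine ((F.map f).hom.continuous.image_connectedComponent_subset _).trans ?_
      rw [Pi0Aux.cone_nat c f y']
    have hcore := Pi0Aux.core F hcompact ht2 A (fun i => ⟨_, mem_connectedComponent⟩)
      (fun i => isClosed_connectedComponent) (fun i => isPreconnected_connectedComponent) hmapA
    -- preimage of `secsIn` is preconnected and contains `y` and `y'`
    have hTsub : Pi0Aux.secsIn F A ⊆ Set.range e := by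
      intro v hv
      rw [hrange]
      exact hv.2
    have himg : e '' (e ⁻¹' Pi0Aux.secsIn F A) = Pi0Aux.secsIn F A :=
      Set.image_preimage_eq_of_subset hTsub
    have hLpre : IsPreconnected (e ⁻¹' Pi0Aux.secsIn F A) := by
      rw [← hind.isPreconnected_image, himg]
      exact hcore.2
    have hy : y ∈ e ⁻¹' Pi0Aux.secsIn F A := by
      refine ⟨fun i => ?_, fun i j f => Pi0Aux.cone_nat c f y⟩
      exact ConnectedComponents.coe_eq_coe'.mp (hyy' i)
    have hy' : y' ∈ e ⁻¹' Pi0Aux.secsIn F A :=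
      ⟨fun i => mem_connectedComponent, fun i j f => Pi0Aux.cone_nat c f y'⟩
    have : y ∈ connectedComponent y' :=
      hLpre.subset_connectedComponent hy' hy
    exact ConnectedComponents.coe_eq_coe'.mpr this
  have hcont : Continuous (pi0ConeMap F c) := by
    apply continuous_pi
    intro i
    exact (c.π.app i).hom.continuous.connectedComponentsMap_continuous
  refine ⟨(hcont.isClosedEmbedding hinj).toIsEmbedding, ?_⟩
  apply Set.Subset.antisymm
  · rintro _ ⟨z, rfl⟩
    intro i j f
    obtain ⟨y, rfl⟩ := ConnectedComponents.surjective_coe z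
    show ((F.map f (c.π.app i y) : F.obj j) : ConnectedComponents (F.obj j)) = _
    exact congrArg _ (Pi0Aux.cone_nat c f y)
  · intro u hu
    have hx : ∀ i, ∃ x : F.obj i, (x : ConnectedComponents (F.obj i)) = u i :=
      fun i => ConnectedComponents.surjective_coe (u i)
    choose x hxu using hx
    set A : ∀ i, Set (F.obj i) := fun i => connectedComponent (x i) with hA
    have hmapA : ∀ ⦃i j : I⦄ (f : i ⟶ j), F.map f '' A i ⊆ A j := by
      intro i j f
      refine ((F.map f).hom.continuous.image_connectedComponent_subset _).trans ?_
      have : ((F.map f (x i) : F.obj j) : ConnectedComponents (F.obj j)) = (x j : _) := by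
        have := hu i j f
        rw [← hxu i, ← hxu j] at this
        exact this
      rw [ConnectedComponents.coe_eq_coe.mp this]
    have hcore := Pi0Aux.core F hcompact ht2 A (fun i => ⟨_, mem_connectedComponent⟩)
      (fun i => isClosed_connectedComponent) (fun i => isPreconnected_connectedComponent) hmapA
    obtain ⟨v, hv⟩ := hcore.1
    obtain ⟨z, hz⟩ := Pi0Aux.exists_of_section hc v hv.2
    refine ⟨(z : ConnectedComponents c.pt), funext fun i => ?_⟩
    show ((c.π.app i z : F.obj i) : ConnectedComponents (F.obj i)) = u i
    rw [hz i, ← hxu i]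
    exact ConnectedComponents.coe_eq_coe'.mpr (hv.1 i)
end

section
/- Every finitely presented torsion module M over the ring of integers O of C_p is isomorphic to a finite direct sum O/π₁O ⊕ … ⊕ O/π_nO for suitable nonzero elements π₁, …, π_n of the maximal ideal m of O. -/
set_option linter.unusedVariables false

open scoped NNReal

/-- The ring of integers (closed unit ball) of a nonarchimedean normed field,
e.g. `𝒪 ⊆ ℂ_p`. -/
def ringOfIntegers (Cp : Type*) [NormedField Cp] [IsUltrametricDist Cp] : Subring Cp where
  carrier := {x | ‖x‖ ≤ 1}
  mul_mem' := by
    intro a b ha hb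
    simp only [Set.mem_setOf_eq, norm_mul] at *
    calc ‖a‖ * ‖b‖ ≤ 1 * 1 := mul_le_mul ha hb (norm_nonneg _) zero_le_one
    _ = 1 := mul_one 1
  one_mem' := by simp
  add_mem' := by
    intro a b ha hb
    exact le_trans (IsUltrametricDist.norm_add_le_max a b) (max_le ha hb)
  zero_mem' := by simp
  neg_mem' := by intro a ha; simpa using ha

/-- The maximal ideal (open unit ball) of the ring of integers. -/
def maxIdeal (Cp : Type*) [NormedField Cp] [IsUltrametricDist Cp] :
    Ideal (ringOfIntegers Cp) where
  carrier := {x | ‖(x : Cp)‖ < 1}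
  add_mem' := by
    intro a b ha hb
    exact lt_of_le_of_lt (IsUltrametricDist.norm_add_le_max (a : Cp) (b : Cp)) (max_lt ha hb)
  zero_mem' := by simp
  smul_mem' := by
    intro c x hx
    simp only [Set.mem_setOf_eq, smul_eq_mul] at *
    push_cast
    rw [norm_mul]
    exact lt_of_le_of_lt (mul_le_of_le_one_left (norm_nonneg _) c.2) hx

section SmithAux

open Submodule

variable {R : Type*} [CommRing R]

/-- Split a Pi type over `Fin (n+1)` at index `i`. -/
def piSplitAtLinear {n : ℕ} (i : Fin (n + 1)) (φ : Fin (n + 1) → Type*)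
    [∀ j, AddCommGroup (φ j)] [∀ j, Module R (φ j)] :
    (∀ j, φ j) ≃ₗ[R] φ i × ∀ k, φ (i.succAbove k) where
  toFun x := (x i, fun k => x (i.succAbove k))
  map_add' _ _ := rfl
  map_smul' _ _ := rfl
  invFun y := i.insertNth y.1 y.2
  left_inv x := Fin.insertNth_self_removeNth i x
  right_inv y := Prod.ext (Fin.insertNth_apply_same i y.1 y.2)
    (funext fun k => Fin.insertNth_apply_succAbove i y.1 y.2 k)

/-- Drop subsingleton components from a finite product. -/
def piSubtypeEquivLinear {ι : Type*} (P : ι → Prop) [DecidablePred P] (φ : ι → Type*)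
    [∀ i, AddCommGroup (φ i)] [∀ i, Module R (φ i)] (h : ∀ i, ¬ P i → Subsingleton (φ i)) :
    (∀ i, φ i) ≃ₗ[R] (∀ i : {j // P j}, φ i) where
  toFun f i := f i
  map_add' _ _ := rfl
  map_smul' _ _ := rfl
  invFun g i := if hi : P i then g ⟨i, hi⟩ else 0
  left_inv f := by
    funext i
    by_cases hi : P i
    · simp [hi]
    · exact @Subsingleton.elim _ (h i hi) _ _
  right_inv g := by
    funext i
    simp only [dif_pos i.2]
  
/-- Quotient of a product by a product of submodules. -/
noncomputable def quotientProdEquiv {A B : Type*} [AddCommGroup A] [AddCommGroup B]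
    [Module R A] [Module R B] (p : Submodule R A) (q : Submodule R B) :
    ((A × B) ⧸ p.prod q) ≃ₗ[R] (A ⧸ p) × (B ⧸ q) :=
  (Submodule.quotEquivOfEq _ _
      (by rw [LinearMap.ker_prodMap, Submodule.ker_mkQ, Submodule.ker_mkQ])).trans
    ((p.mkQ.prodMap q.mkQ).quotKerEquivOfSurjective
      (by
        rintro ⟨a, b⟩
        obtain ⟨a', rfl⟩ := p.mkQ_surjective a
        obtain ⟨b', rfl⟩ := q.mkQ_surjective b
        exact ⟨(a', b'), rfl⟩))

theorem exists_dvd_all_aux (hdvd : ∀ a b : R, a ∣ b ∨ b ∣ a) {ι : Type*} [Fintype ι]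
    [Nonempty ι] (f : ι → R) : ∃ p, ∀ q, f p ∣ f q := by
  classical
  have key : ∀ (s : Finset ι), s.Nonempty → ∃ p ∈ s, ∀ q ∈ s, f p ∣ f q := by
    intro s hs
    induction hs using Finset.Nonempty.cons_induction with
    | singleton a => exact ⟨a, by simp⟩
    | cons a s ha hs ih =>
      obtain ⟨p, hp, hall⟩ := ih
      rcases hdvd (f a) (f p) with h | h
      · refine ⟨a, Finset.mem_cons_self a s, fun q hq => ?_⟩
        rcases Finset.mem_cons.mp hq with rfl | hq
        · exact dvd_rfl
        · exact h.trans (hall q hq)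
      · refine ⟨p, Finset.mem_cons_of_mem hp, fun q hq => ?_⟩
        rcases Finset.mem_cons.mp hq with rfl | hq
        · exact h
        · exact hall q hq
  obtain ⟨p, _, hall⟩ := key Finset.univ Finset.univ_nonempty
  exact ⟨p, fun q => hall q (Finset.mem_univ q)⟩

theorem smith_normal_form_aux (hdvd : ∀ a b : R, a ∣ b ∨ b ∣ a) :
    ∀ (n m : ℕ) (v : Fin m → (Fin n → R)),
      ∃ d : Fin n → R,
        Nonempty (((Fin n → R) ⧸ Submodule.span R (Set.range v)) ≃ₗ[R]
          ((i : Fin n) → R ⧸ Ideal.span {d i})) := by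
  intro n
  induction n with
  | zero =>
    intro m v
    refine ⟨fun i => i.elim0, ⟨?_⟩⟩
    have h1 : Subsingleton ((Fin 0 → R) ⧸ Submodule.span R (Set.range v)) := by
      constructor
      intro a b
      obtain ⟨a, rfl⟩ := Submodule.Quotient.mk_surjective _ a
      obtain ⟨b, rfl⟩ := Submodule.Quotient.mk_surjective _ b
      congr 1
      exact Subsingleton.elim _ _
    exact LinearEquiv.ofSubsingleton _ _
  | succ n IH =>
    intro m v
    classical
    rcases isEmpty_or_nonempty (Fin m) with hm | hm
    · have hr : Submodule.span R (Set.range v) = ⊥ := by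
        rw [Set.range_eq_empty, Submodule.span_empty]
      refine ⟨fun _ => 0, ⟨?_⟩⟩
      exact (Submodule.quotEquivOfEqBot _ hr).trans
        (LinearEquiv.piCongrRight fun i =>
          (Submodule.quotEquivOfEqBot (Ideal.span {(0:R)}) (by simp)).symm)
    · obtain ⟨⟨j₀, i₀⟩, hpiv⟩ :=
        exists_dvd_all_aux hdvd (fun q : Fin m × Fin (n+1) => v q.1 q.2)
      set d := v j₀ i₀ with hd
      have hdall : ∀ j i, d ∣ v j i := fun j i => hpiv (j, i)
      choose c hc using fun j => hdall j i₀
      choose r hr using fun i => hdall j₀ i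
      -- column operations
      set v' : Fin m → (Fin (n+1) → R) :=
        fun j => if j = j₀ then v j₀ else v j - c j • v j₀ with hv'
      have hv'j₀ : v' j₀ = v j₀ := by simp [hv']
      have hspan : Submodule.span R (Set.range v') = Submodule.span R (Set.range v) := by
        apply le_antisymm
        · rw [Submodule.span_le]
          rintro _ ⟨j, rfl⟩
          by_cases h : j = j₀
          · subst h
            rw [hv'j₀]
            exact Submodule.subset_span ⟨j, rfl⟩
          · simp only [hv', if_neg h]
            exact sub_mem (Submodule.subset_span ⟨j, rfl⟩)
              (Submodule.smul_mem _ _ (Submodule.subset_span ⟨j₀, rfl⟩))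
        · rw [Submodule.span_le]
          rintro _ ⟨j, rfl⟩
          by_cases h : j = j₀
          · subst h
            rw [← hv'j₀]
            exact Submodule.subset_span ⟨j, rfl⟩
          · have hveq : v j = v' j + c j • v' j₀ := by
              rw [hv'j₀]
              simp only [hv', if_neg h]
              abel
            rw [hveq]
            exact add_mem (Submodule.subset_span ⟨j, rfl⟩)
              (Submodule.smul_mem _ _ (Submodule.subset_span ⟨j₀, rfl⟩))
      have hv'0 : ∀ j, j ≠ j₀ → v' j i₀ = 0 := by
        intro j h
        have : v' j i₀ = v j i₀ - c j * v j₀ i₀ := by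
          simp [hv', if_neg h]
        rw [this, hc j, ← hd]
        ring
      -- row operation
      let T : (Fin (n+1) → R) ≃ₗ[R] (Fin (n+1) → R) :=
      { toFun := fun x i => x i - if i = i₀ then 0 else r i * x i₀
        map_add' := by
          intro x y
          funext i
          by_cases h : i = i₀ <;> simp [h] <;> ring
        map_smul' := by
          intro a x
          funext i
          by_cases h : i = i₀ <;> simp [h] <;> ring
        invFun := fun x i => x i + if i = i₀ then 0 else r i * x i₀
        left_inv := by
          intro x
          funext i
          by_cases h : i = i₀ <;> simp [h]
        right_inv := by
          intro x
          funext i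
          by_cases h : i = i₀ <;> simp [h] }
      have hT : ∀ (x : Fin (n+1) → R) i, T x i = x i - if i = i₀ then 0 else r i * x i₀ :=
        fun _ _ => rfl
      set w : Fin m → (Fin (n+1) → R) := fun j => T (v' j) with hwdef
      have hw₀ : w j₀ = fun i => if i = i₀ then d else 0 := by
        funext i
        rw [hwdef]
        simp only
        rw [hT, hv'j₀]
        by_cases h : i = i₀
        · subst h; simp [hd]
        · rw [if_neg h, if_neg h, hr i, ← hd]
          ring
      have hwne : ∀ j, j ≠ j₀ → w j = v' j := by
        intro j h
        funext i
        rw [hwdef]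
        simp only
        rw [hT]
        by_cases hi : i = i₀
        · simp [hi]
        · rw [if_neg hi, hv'0 j h]
          ring
      have hwne0 : ∀ j, j ≠ j₀ → w j i₀ = 0 := by
        intro j h
        rw [hwne j h]
        exact hv'0 j h
      have hmapT : (Submodule.span R (Set.range v)).map
          (T : (Fin (n+1) → R) →ₗ[R] (Fin (n+1) → R)) = Submodule.span R (Set.range w) := by
        rw [← hspan, Submodule.map_span, ← Set.range_comp]
        rfl
      -- splitting
      let S := piSplitAtLinear (R := R) i₀ (fun _ => R)
      set u : Fin m → (Fin n → R) := fun j k => w j (i₀.succAbove k) with hu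
      have hSw : ∀ j, S (w j) = (w j i₀, u j) := fun j => rfl
      have hSwj₀ : S (w j₀) = (d, 0) := by
        rw [hSw]
        refine Prod.ext ?_ ?_
        · show w j₀ i₀ = d
          rw [hw₀]; simp
        · funext k
          show w j₀ (i₀.succAbove k) = 0
          rw [hw₀]
          simp [Fin.succAbove_ne]
      have hmapS : (Submodule.span R (Set.range w)).map
          (S : (Fin (n+1) → R) →ₗ[R] (R × (Fin n → R)))
          = Submodule.prod (Ideal.span {d} : Submodule R R) (Submodule.span R (Set.range u)) := by
        apply le_antisymm
        · rw [Submodule.map_span, ← Set.range_comp, Submodule.span_le]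
          rintro _ ⟨j, rfl⟩
          show S (w j) ∈ _
          rw [hSw]
          refine Submodule.mem_prod.mpr ⟨?_, Submodule.subset_span ⟨j, rfl⟩⟩
          by_cases h : j = j₀
          · subst h
            have : w j i₀ = d := by rw [hw₀]; simp
            rw [this]
            exact Ideal.mem_span_singleton_self d
          · rw [hwne0 j h]
            exact zero_mem _
        · rintro ⟨x, y⟩ hz
          rw [Submodule.mem_prod] at hz
          obtain ⟨hx', hy'⟩ := hz
          have hx : x ∈ Ideal.span {d} := hx'
          have hy : y ∈ Submodule.span R (Set.range u) := hy'
          clear hx' hy'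
          have h1 : ((x, 0) : R × (Fin n → R)) ∈
              (Submodule.span R (Set.range w)).map
                (S : (Fin (n+1) → R) →ₗ[R] (R × (Fin n → R))) := by
            obtain ⟨a, ha⟩ := Ideal.mem_span_singleton'.mp hx
            refine ⟨a • w j₀, Submodule.smul_mem _ _ (Submodule.subset_span ⟨j₀, rfl⟩), ?_⟩
            show S (a • w j₀) = (x, 0)
            rw [map_smul, hSwj₀, Prod.smul_mk, smul_zero, smul_eq_mul, ha]
          have h2 : ((0, y) : R × (Fin n → R)) ∈
              (Submodule.span R (Set.range w)).map
                (S : (Fin (n+1) → R) →ₗ[R] (R × (Fin n → R))) := by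
            induction hy using Submodule.span_induction with
            | mem z hz =>
              obtain ⟨j, rfl⟩ := hz
              by_cases h : j = j₀
              · subst h
                have : u j = 0 := by
                  funext k
                  show w j (i₀.succAbove k) = 0
                  rw [hw₀]; simp [Fin.succAbove_ne]
                rw [this]
                exact zero_mem _
              · refine ⟨w j, Submodule.subset_span ⟨j, rfl⟩, ?_⟩
                show (w j i₀, u j) = (0, u j)
                rw [hwne0 j h]
            | zero => exact zero_mem _
            | add y₁ y₂ _ _ ih₁ ih₂ => simpa using add_mem ih₁ ih₂
            | smul a y₁ _ ih => simpa using Submodule.smul_mem _ a ih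
          have := add_mem h1 h2
          simpa using this
      obtain ⟨d', ⟨E4⟩⟩ := IH m u
      set D := Fin.insertNth (α := fun _ => R) i₀ d d' with hD
      refine ⟨D, ⟨?_⟩⟩
      have E1 : ((Fin (n+1) → R) ⧸ Submodule.span R (Set.range v)) ≃ₗ[R]
          ((Fin (n+1) → R) ⧸ Submodule.span R (Set.range w)) :=
        Submodule.Quotient.equiv _ _ T hmapT
      have E2 : ((Fin (n+1) → R) ⧸ Submodule.span R (Set.range w)) ≃ₗ[R]
          ((R × (Fin n → R)) ⧸ Submodule.prod (Ideal.span {d} : Submodule R R)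
            (Submodule.span R (Set.range u))) :=
        Submodule.Quotient.equiv _ _ S hmapS
      have E3 : ((R × (Fin n → R)) ⧸ Submodule.prod (Ideal.span {d} : Submodule R R)
            (Submodule.span R (Set.range u))) ≃ₗ[R]
          ((R ⧸ Ideal.span {d}) × ((Fin n → R) ⧸ Submodule.span R (Set.range u))) :=
        quotientProdEquiv _ _
      have E5 : ((R ⧸ Ideal.span {d}) × ((Fin n → R) ⧸ Submodule.span R (Set.range u))) ≃ₗ[R]
          ((R ⧸ Ideal.span {D i₀}) × ((k : Fin n) → R ⧸ Ideal.span {D (i₀.succAbove k)})) :=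
        LinearEquiv.prodCongr
          (Submodule.quotEquivOfEq (Ideal.span {d}) (Ideal.span {D i₀})
            (by rw [hD, Fin.insertNth_apply_same]))
          (E4.trans (LinearEquiv.piCongrRight fun k => Submodule.quotEquivOfEq _ _
            (by rw [hD, Fin.insertNth_apply_succAbove])))
      have E6 : ((i : Fin (n+1)) → R ⧸ Ideal.span {D i}) ≃ₗ[R]
          ((R ⧸ Ideal.span {D i₀}) × ((k : Fin n) → R ⧸ Ideal.span {D (i₀.succAbove k)})) :=
        piSplitAtLinear (R := R) i₀ (fun i => R ⧸ Ideal.span {D i})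
      exact E1.trans (E2.trans (E3.trans (E5.trans E6.symm)))

end SmithAux

theorem torsion_structure_aux {R : Type*} [CommRing R] {M : Type*} [AddCommGroup M] [Module R M]
    (hdvd : ∀ a b : R, a ∣ b ∨ b ∣ a)
    (hfp : Module.FinitePresentation R M)
    (htors : ∀ x : M, ∃ a : R, a ≠ 0 ∧ a • x = 0) :
    ∃ (n : ℕ) (π : Fin n → R), (∀ i, ¬ IsUnit (π i) ∧ π i ≠ 0) ∧
      Nonempty (M ≃ₗ[R] ((i : Fin n) → R ⧸ Ideal.span {π i})) := by
  classical
  obtain ⟨s, hspan, hker⟩ := hfp.out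
  let f : (↥s →₀ R) →ₗ[R] M := Finsupp.linearCombination R (Subtype.val : ↥s → M)
  have hfsurj : Function.Surjective f := by
    rw [← LinearMap.range_eq_top, Finsupp.range_linearCombination, Subtype.range_coe_subtype,
      Finset.setOf_mem, hspan]
  let G : (Fin (Fintype.card ↥s) → R) ≃ₗ[R] (↥s →₀ R) :=
    (LinearEquiv.funCongrLeft R R (Fintype.equivFin ↥s).symm.symm).trans
      (Finsupp.linearEquivFunOnFinite R R ↥s).symm
  let φ : (Fin (Fintype.card ↥s) → R) →ₗ[R] M :=
    f ∘ₗ (G : (Fin (Fintype.card ↥s) → R) →ₗ[R] (↥s →₀ R))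
  have hφsurj : Function.Surjective φ := hfsurj.comp G.surjective
  have hkfg : (LinearMap.ker φ).FG := by
    show (LinearMap.ker (f ∘ₗ (G : (Fin (Fintype.card ↥s) → R) →ₗ[R] (↥s →₀ R)))).FG
    rw [LinearMap.ker_comp, Submodule.comap_equiv_eq_map_symm]
    exact Submodule.FG.map _ hker
  obtain ⟨m, v, hv⟩ := Submodule.fg_iff_exists_fin_generating_family.mp hkfg
  obtain ⟨d, ⟨Esm⟩⟩ := smith_normal_form_aux hdvd (Fintype.card ↥s) m v
  have EM : M ≃ₗ[R] ((i : Fin (Fintype.card ↥s)) → R ⧸ Ideal.span {d i}) :=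
    ((LinearMap.quotKerEquivOfSurjective φ hφsurj).symm.trans
      (Submodule.quotEquivOfEq _ _ hv.symm)).trans Esm
  -- torsion forces all diagonal entries to be nonzero
  have hdne : ∀ i, d i ≠ 0 := by
    intro i h0
    let x : (j : Fin (Fintype.card ↥s)) → R ⧸ Ideal.span {d j} :=
      Pi.single i (Submodule.Quotient.mk 1)
    obtain ⟨a, ha, hax⟩ := htors (EM.symm x)
    apply ha
    have h1 : a • x = 0 := by
      have := congrArg EM hax
      rwa [map_smul, EM.apply_symm_apply, map_zero] at this
    have h2 := congrFun h1 i
    rw [Pi.smul_apply, Pi.zero_apply] at h2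
    have hxi : x i = Submodule.Quotient.mk 1 := Pi.single_eq_same i _
    rw [hxi] at h2
    have h3 : (Submodule.Quotient.mk (a * 1) : R ⧸ Ideal.span {d i}) = 0 := by
      rw [← Submodule.Quotient.mk_smul] at h2
      simpa using h2
    rw [mul_one] at h3
    have h4 : a ∈ Ideal.span {d i} := (Submodule.Quotient.mk_eq_zero _).mp h3
    rw [h0, Ideal.span_singleton_eq_bot.mpr rfl] at h4
    simpa using h4
  -- discard the unit entries
  let P : Fin (Fintype.card ↥s) → Prop := fun i => ¬ IsUnit (d i)
  have hsub : ∀ i, ¬ P i → Subsingleton (R ⧸ Ideal.span {d i}) := by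
    intro i hi
    rw [Submodule.Quotient.subsingleton_iff]
    exact Ideal.span_singleton_eq_top.mpr (not_not.mp hi)
  let Efil : ((i : Fin (Fintype.card ↥s)) → R ⧸ Ideal.span {d i}) ≃ₗ[R]
      ((i : {j // P j}) → R ⧸ Ideal.span {d (i : Fin (Fintype.card ↥s))}) :=
    piSubtypeEquivLinear P _ hsub
  let e2 : Fin (Fintype.card {j // P j}) ≃ {j // P j} := (Fintype.equivFin _).symm
  refine ⟨Fintype.card {j // P j}, fun t => d (e2 t), fun t => ⟨(e2 t).2, hdne _⟩, ?_⟩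
  exact ⟨EM.trans (Efil.trans
    (LinearEquiv.piCongrLeft R
      (fun j : {j // P j} => R ⧸ Ideal.span {d (j : Fin (Fintype.card ↥s))}) e2).symm)⟩

/- `Cp` is (an abstract copy of) `ℂ_p`: a complete algebraically closed nonarchimedean
normed field extension of `ℚ_p`, with isometric structure map and dense subfield of
elements algebraic over `ℚ_p`. -/
variable (p : ℕ) [Fact p.Prime]
variable (Cp : Type*) [NormedField Cp] [IsUltrametricDist Cp] [CompleteSpace Cp]
  [IsAlgClosed Cp] [NormedAlgebra ℚ_[p] Cp]

set_option synthInstance.maxHeartbeats 1000000 in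
set_option maxHeartbeats 2000000 in
/-- Every finitely presented torsion module `M` over the ring of integers
`𝒪` of `ℂ_p` is isomorphic to a finite direct sum `𝒪/π₁𝒪 ⊕ … ⊕ 𝒪/π_n𝒪` for suitable
nonzero elements `π₁, …, π_n` of the maximal ideal `𝔪`. -/
theorem finitePresentation_torsion_module_structure
    (hiso : ∀ q : ℚ_[p], ‖algebraMap ℚ_[p] Cp q‖ = ‖q‖)
    (hdense : DenseRange (fun x : integralClosure ℚ_[p] Cp => (x : Cp)))
    {M : Type*} [AddCommGroup M] [Module (ringOfIntegers Cp) M]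
    (hfp : Module.FinitePresentation (ringOfIntegers Cp) M)
    (htors : ∀ x : M, ∃ a : ringOfIntegers Cp, a ≠ 0 ∧ a • x = 0) :
    ∃ (n : ℕ) (π : Fin n → ringOfIntegers Cp),
      (∀ i, π i ∈ maxIdeal Cp ∧ π i ≠ 0) ∧
      Nonempty (M ≃ₗ[ringOfIntegers Cp]
        ((i : Fin n) → ringOfIntegers Cp ⧸ Ideal.span {π i})) := by
  classical
  -- divisibility is total in the ring of integers
  have key : ∀ a b : ringOfIntegers Cp, ‖(a : Cp)‖ ≤ ‖(b : Cp)‖ → b ∣ a := by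
    intro a b h
    rcases eq_or_ne b 0 with rfl | hb
    · have h0 : ‖(a : Cp)‖ ≤ 0 := by simpa using h
      have ha : a = 0 := by
        apply Subtype.ext
        simpa using norm_le_zero_iff.mp h0
      rw [ha]
    · have hbC : (b : Cp) ≠ 0 := fun hc => hb (Subtype.ext (by simpa using hc))
      have hcmem : ((a : Cp) / (b : Cp)) ∈ ringOfIntegers Cp := by
        show ‖(a : Cp) / (b : Cp)‖ ≤ 1
        rw [norm_div]
        exact div_le_one_of_le₀ h (norm_nonneg _)
      refine ⟨⟨(a : Cp) / (b : Cp), hcmem⟩, ?_⟩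
      have hmul : (b : Cp) * ((a : Cp) / (b : Cp)) = (a : Cp) := by field_simp
      exact Subtype.ext (by push_cast; exact hmul.symm)
  have hdvd : ∀ a b : ringOfIntegers Cp, a ∣ b ∨ b ∣ a := by
    intro a b
    rcases le_total ‖(a : Cp)‖ ‖(b : Cp)‖ with h | h
    · exact Or.inr (key a b h)
    · exact Or.inl (key b a h)
  obtain ⟨n, π, hπ, hE⟩ := torsion_structure_aux hdvd hfp htors
  refine ⟨n, π, fun i => ⟨?_, (hπ i).2⟩, hE⟩
  have hnu : ¬ IsUnit (π i) := (hπ i).1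
  show ‖((π i : ringOfIntegers Cp) : Cp)‖ < 1
  rcases lt_or_ge ‖((π i : ringOfIntegers Cp) : Cp)‖ 1 with h | h
  · exact h
  · exfalso
    apply hnu
    have h1 : ‖((π i : ringOfIntegers Cp) : Cp)‖ = 1 := le_antisymm (π i).2 h
    have hne : ((π i : ringOfIntegers Cp) : Cp) ≠ 0 := by
      intro hc
      rw [hc] at h1
      simp at h1
    have hinv : (((π i : ringOfIntegers Cp) : Cp))⁻¹ ∈ ringOfIntegers Cp := by
      show ‖(((π i : ringOfIntegers Cp) : Cp))⁻¹‖ ≤ 1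
      rw [norm_inv, h1]
      norm_num
    refine IsUnit.of_mul_eq_one ⟨_, hinv⟩ ?_
    apply Subtype.ext
    show ((π i : ringOfIntegers Cp) : Cp) * (((π i : ringOfIntegers Cp) : Cp))⁻¹ = 1
    exact mul_inv_cancel₀ hne
end
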